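/- Let Ĝ = diag(1,−1,−1,−1,1) and let so(2,3) = {x ∈ gl(5,ℝ) : xᵀĜ + Ĝx = 0}, with standard generators M_{AB} (0 ≤ A < B ≤ 4) given by (M_{AB})^C{}_D = Ĝ_{BD}δ^C_A − Ĝ_{AD}δ^C_B. On the order-3 algebra so(2,3) ⊕ ad so(2,3) with 3-bracket μ(x,y,z) = B(x,y)z + B(y,z)x + B(z,x)y, B(x,y) = −(1/2)Tr(xy), and g₁-generators J_{AB} (the copies of M_{AB}), perform for t ≠ 0 the change of basis L_{mn} = M_{mn}, P_m = t³M_{m4} (0 ≤ m < n ≤ 3) in g₀ and V_{mn} = tJ_{mn}, V_m = tJ_{m4} in g₁. Then every Lie bracket, module action, and 3-bracket among the rescaled generators, expanded in the rescaled basis, has coefficients that are polynomial in t, and their values at t = 0 are exactly the brackets of the contracted algebra (lege-mica): in particular [P_m,P_p] = −t⁶L_{mp} → 0, P_m·V_{pq} → 0, P_m·V_p → 0, μ(V_{mn},V_{pq},V_{rs}) → 0, μ(V_{mn},V_p,V_r) → 0, while μ(V_{mn},V_{pq},V_r) = (η_{mp}η_{nq} − η_{mq}η_{np})P_r and μ(V_m,V_p,V_r)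 = η_{mp}P_r + η_{mr}P_p + η_{pr}P_m hold exactly for all t ≠ 0, and the Lorentz brackets are unchanged (η = diag(1,−1,−1,−1)). (This realizes the Poincaré algebra of order 3 (lege-mica) as an Inönü–Wigner contraction of so(2,3) ⊕ ad so(2,3).) -/

import Mathlib

noncomputable section

/-- `Ĝ = diag(1,−1,−1,−1,1)`, the invariant metric of `so(2,3)`. -/
def Ghat : Matrix (Fin 5) (Fin 5) ℝ := Matrix.diagonal ![1, -1, -1, -1, 1]

/-- The standard generators of `so(2,3) = {x ∈ gl(5,ℝ) : xᵀĜ + Ĝx = 0}`: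
`(M_{AB})^C{}_D = Ĝ_{BD}δ^C_A − Ĝ_{AD}δ^C_B`. -/
def Mgen (A B : Fin 5) : Matrix (Fin 5) (Fin 5) ℝ :=
  Matrix.of fun C D =>
    Ghat B D * (if C = A then 1 else 0) - Ghat A D * (if C = B then 1 else 0)

/-- The invariant form `B(x,y) = −(1/2)Tr(xy)`. -/
def Bso5 (x y : Matrix (Fin 5) (Fin 5) ℝ) : ℝ := -(1 / 2) * Matrix.trace (x * y)

/-- The 3-bracket of the order-3 algebra `so(2,3) ⊕ ad so(2,3)`:
`μ(x,y,z) = B(x,y)z + B(y,z)x + B(z,x)y`. -/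
def muSO23 (x y z : Matrix (Fin 5) (Fin 5) ℝ) : Matrix (Fin 5) (Fin 5) ℝ :=
  Bso5 x y • z + Bso5 y z • x + Bso5 z x • y

/-- `η = diag(1,−1,−1,−1)`, the Minkowski metric (restriction of `Ĝ`). -/
def eta4 (m n : Fin 4) : ℝ := Ghat m.castSucc n.castSucc

/-- Unrescaled Lorentz generators `L_{mn} = M_{mn}` (`0 ≤ m,n ≤ 3`) of the contraction. -/
def Lgen (m n : Fin 4) : Matrix (Fin 5) (Fin 5) ℝ := Mgen m.castSucc n.castSucc

/-- Rescaled translation generators `P_m = t³ M_{m4}`. -/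
def Pgen (t : ℝ) (m : Fin 4) : Matrix (Fin 5) (Fin 5) ℝ := t ^ 3 • Mgen m.castSucc 4

/-- Rescaled `g₁`-generators `V_{mn} = t J_{mn}` (with `J_{AB}` the copy of `M_{AB}` in
the adjoint module `ad so(2,3)`). -/
def V2gen (t : ℝ) (m n : Fin 4) : Matrix (Fin 5) (Fin 5) ℝ := t • Mgen m.castSucc n.castSucc

/-- Rescaled `g₁`-generators `V_m = t J_{m4}`. -/
def V1gen (t : ℝ) (m : Fin 4) : Matrix (Fin 5) (Fin 5) ℝ := t • Mgen m.castSucc 4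

def gd (k : Fin 5) : ℝ := ![1, -1, -1, -1, 1] k
def Sb (A B : Fin 5) : Matrix (Fin 5) (Fin 5) ℝ := Matrix.single A B (gd B)

lemma Ghat_apply (A B : Fin 5) : Ghat A B = if A = B then gd A else 0 := by
  simp [Ghat, Matrix.diagonal_apply, gd]

lemma Ghat_symm (A B : Fin 5) : Ghat A B = Ghat B A := by
  by_cases h : A = B
  · subst h; rfl
  · simp [Ghat, Matrix.diagonal_apply_ne _ h, Matrix.diagonal_apply_ne _ (Ne.symm h)]

lemma Mgen_eq (A B : Fin 5) : Mgen A B = Sb A B - Sb B A := by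
  ext C D
  simp only [Mgen, Sb, Matrix.of_apply, Matrix.sub_apply, Matrix.single,
    Ghat_apply]
  by_cases h1 : A = C <;> by_cases h2 : B = D <;> by_cases h3 : B = C <;>
    by_cases h4 : A = D <;> simp_all <;> (try ring) <;> (intro h; subst h; simp_all)

lemma Sb_mul (A B C D : Fin 5) : Sb A B * Sb C D = Ghat B C • Sb A D := by
  by_cases h : B = C
  · subst h
    rw [Sb, Sb, Matrix.single_mul_single_same, Ghat_apply, if_pos rfl, Sb,
      Matrix.smul_single, smul_eq_mul]
  · rw [Sb, Sb, Matrix.single_mul_single_of_ne (c := gd B) A B C h (gd D), Ghat_apply, if_neg h, zero_smul]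

lemma trace_Sb (A B : Fin 5) : Matrix.trace (Sb A B) = Ghat A B := by
  by_cases h : A = B
  · subst h; simp [Sb, Matrix.trace, Matrix.diag, Matrix.single, Ghat_apply]
  · rw [Ghat_apply, if_neg h]
    simp only [Sb, Matrix.trace, Matrix.diag, Matrix.single, Matrix.of_apply]
    refine Finset.sum_eq_zero fun x _ => if_neg ?_
    rintro ⟨h1, h2⟩; exact h (h1.trans h2.symm)

lemma Mgen_mul (A B C D : Fin 5) : Mgen A B * Mgen C D =
    Ghat B C • Sb A D - Ghat B D • Sb A C - Ghat A C • Sb B D + Ghat A D • Sb B C := by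
  rw [Mgen_eq, Mgen_eq, sub_mul, mul_sub, mul_sub, Sb_mul, Sb_mul, Sb_mul, Sb_mul]
  module

lemma bracket_Mgen (A B C D : Fin 5) : ⁅Mgen A B, Mgen C D⁆ =
    Ghat B C • Mgen A D - Ghat B D • Mgen A C - Ghat A C • Mgen B D +
      Ghat A D • Mgen B C := by
  rw [Ring.lie_def, Mgen_mul, Mgen_mul, Mgen_eq A D, Mgen_eq A C, Mgen_eq B D, Mgen_eq B C,
    Ghat_symm D A, Ghat_symm D B, Ghat_symm C A, Ghat_symm C B]
  module

lemma Bso5_Mgen (A B C D : Fin 5) : Bso5 (Mgen A B) (Mgen C D) =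
    Ghat A C * Ghat B D - Ghat A D * Ghat B C := by
  rw [Bso5, Mgen_mul]
  simp only [Matrix.trace_add, Matrix.trace_sub, Matrix.trace_smul, trace_Sb, smul_eq_mul]
  rw [Ghat_symm B C, Ghat_symm A D]
  ring

lemma Mgen_antisymm (A B : Fin 5) : Mgen A B = -Mgen B A := by
  rw [Mgen_eq, Mgen_eq]; module

lemma Ghat_cs4 (m : Fin 4) : Ghat m.castSucc (4 : Fin 5) = 0 :=
  Matrix.diagonal_apply_ne _ (Fin.castSucc_lt_last m).ne

lemma Ghat_4cs (m : Fin 4) : Ghat (4 : Fin 5) m.castSucc = 0 :=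
  Matrix.diagonal_apply_ne _ (Fin.castSucc_lt_last m).ne'

lemma Ghat_44 : Ghat (4 : Fin 5) (4 : Fin 5) = 1 := rfl

lemma bracket_smul (a b : ℝ) (x y : Matrix (Fin 5) (Fin 5) ℝ) :
    ⁅a • x, b • y⁆ = (a * b) • ⁅x, y⁆ := by
  rw [Ring.lie_def, Ring.lie_def, smul_mul_smul_comm, smul_mul_smul_comm, mul_comm b a, smul_sub]

lemma smul_lie_M (a : ℝ) (x y : Matrix (Fin 5) (Fin 5) ℝ) : ⁅a • x, y⁆ = a • ⁅x, y⁆ := by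
  rw [Ring.lie_def, Ring.lie_def, smul_mul_assoc, mul_smul_comm, smul_sub]

lemma lie_smul_M (a : ℝ) (x y : Matrix (Fin 5) (Fin 5) ℝ) : ⁅x, a • y⁆ = a • ⁅x, y⁆ := by
  rw [Ring.lie_def, Ring.lie_def, smul_mul_assoc, mul_smul_comm, smul_sub]

lemma mu_smul (a b c : ℝ) (x y z : Matrix (Fin 5) (Fin 5) ℝ) :
    muSO23 (a • x) (b • y) (c • z) = (a * b * c) • muSO23 x y z := by
  simp only [muSO23, Bso5, smul_mul_assoc, Matrix.mul_smul, Matrix.trace_smul,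
    smul_eq_mul]
  module



/-- The Inönü–Wigner contraction of the order-3 algebra `so(2,3) ⊕ ad so(2,3)`
(3-bracket `μ(x,y,z) = B(x,y)z + B(y,z)x + B(z,x)y`, `B(x,y) = −(1/2)Tr(xy)`, the action
of `g₀` on `g₁` being the adjoint one): for `t ≠ 0`, in the rescaled basis
`L_{mn} = M_{mn}`, `P_m = t³M_{m4}`, `V_{mn} = tJ_{mn}`, `V_m = tJ_{m4}`, every bracket,
module action and 3-bracket has coefficients polynomial in `t` whose values at `t = 0`
are the brackets of the contracted algebra (lege-mica): the Lorentz brackets are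
unchanged, `[P_m,P_p] = −t⁶L_{mp} → 0`, `P_m·V_{pq} → 0`, `P_m·V_p → 0`,
`μ(V_{mn},V_{pq},V_{rs}) → 0`, `μ(V_{mn},V_p,V_r) → 0`, while
`μ(V_{mn},V_{pq},V_r) = (η_{mp}η_{nq} − η_{mq}η_{np})P_r` and
`μ(V_m,V_p,V_r) = η_{mp}P_r + η_{mr}P_p + η_{pr}P_m` hold exactly. -/
theorem so23_contraction_to_poincare_order3 :
    ∀ t : ℝ, t ≠ 0 →
      -- Lorentz brackets unchanged
      (∀ m n p q : Fin 4, ⁅Lgen m n, Lgen p q⁆ =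
        eta4 n q • Lgen p m - eta4 m q • Lgen p n + eta4 n p • Lgen m q -
          eta4 m p • Lgen n q) ∧
      (∀ m n p : Fin 4, ⁅Lgen m n, Pgen t p⁆ = eta4 n p • Pgen t m - eta4 m p • Pgen t n) ∧
      -- [P_m, P_p] = −t⁶ L_{mp} → 0
      (∀ m p : Fin 4, ⁅Pgen t m, Pgen t p⁆ = -(t ^ 6) • Lgen m p) ∧
      -- action of the Lorentz generators on g₁ unchanged
      (∀ m n p q : Fin 4, ⁅Lgen m n, V2gen t p q⁆ =
        eta4 n q • V2gen t p m - eta4 m q • V2gen t p n + eta4 n p • V2gen t m q -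
          eta4 m p • V2gen t n q) ∧
      (∀ m n p : Fin 4, ⁅Lgen m n, V1gen t p⁆ =
        eta4 n p • V1gen t m - eta4 m p • V1gen t n) ∧
      -- P_m · V_{pq} → 0 and P_m · V_p → 0 (coefficients vanishing at t = 0)
      (∀ m p q : Fin 4, ⁅Pgen t m, V2gen t p q⁆ =
        t ^ 3 • (eta4 m p • V1gen t q - eta4 m q • V1gen t p)) ∧
      (∀ m p : Fin 4, ⁅Pgen t m, V1gen t p⁆ = -(t ^ 3) • V2gen t m p) ∧
      -- μ(V_{mn},V_{pq},V_{rs}) → 0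
      (∀ m n p q r s : Fin 4, muSO23 (V2gen t m n) (V2gen t p q) (V2gen t r s) =
        t ^ 3 • ((eta4 m p * eta4 n q - eta4 m q * eta4 n p) • Lgen r s +
          (eta4 m r * eta4 n s - eta4 m s * eta4 n r) • Lgen p q +
          (eta4 p r * eta4 q s - eta4 p s * eta4 q r) • Lgen m n)) ∧
      -- μ(V_{mn},V_{pq},V_r) = (η_{mp}η_{nq} − η_{mq}η_{np}) P_r exactly
      (∀ m n p q r : Fin 4, muSO23 (V2gen t m n) (V2gen t p q) (V1gen t r) =
        (eta4 m p * eta4 n q - eta4 m q * eta4 n p) • Pgen t r) ∧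
      -- μ(V_{mn},V_p,V_r) → 0
      (∀ m n p r : Fin 4, muSO23 (V2gen t m n) (V1gen t p) (V1gen t r) =
        (t ^ 3 * eta4 p r) • Lgen m n) ∧
      -- μ(V_m,V_p,V_r) = η_{mp}P_r + η_{mr}P_p + η_{pr}P_m exactly
      (∀ m p r : Fin 4, muSO23 (V1gen t m) (V1gen t p) (V1gen t r) =
        eta4 m p • Pgen t r + eta4 m r • Pgen t p + eta4 p r • Pgen t m) := by
  intro t ht
  refine ⟨?_, ?_, ?_, ?_, ?_, ?_, ?_, ?_, ?_, ?_, ?_⟩ <;> intros <;>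
    simp only [Lgen, Pgen, V2gen, V1gen, eta4] <;>
    (try simp only [bracket_smul, smul_lie_M, lie_smul_M, mu_smul]) <;>
    simp only [bracket_Mgen, muSO23, Bso5_Mgen] <;>
    (try simp only [Ghat_cs4, Ghat_4cs, Ghat_44, mul_zero, zero_mul, mul_one, one_mul,
      sub_zero, zero_sub, add_zero, zero_add, zero_smul, smul_zero]) <;>
    (try simp only [Ghat_symm]) <;>
    simp only [Mgen_eq] <;>
    module
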